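/- If p and q are nonzero polynomials over a field with degrees d and e respectively in the variable x, then the resultant res_x(p, q) vanishes if (and, when the leading coefficients are units, only if) p and q have a common root in an algebraically closed extension. -/

import Mathlib

/-- The Sylvester matrix of `p` and `q`, where `p` is treated as having degree `d`
and `q` as having degree `e`. Its first `e` rows are shifted copies of the
coefficients of `p`, and its next `d` rows are shifted copies of the coefficients of `q`. -/
noncomputable def sylvesterMatrix {R : Type*} [CommRing R] (d e : ℕ)
    (p q : Polynomial R) : Matrix (Fin (e + d)) (Fin (e + d)) R :=
  Matrix.of fun i j =>
    if (i : ℕ) < e then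
      (if (j : ℕ) ≤ d + (i : ℕ) ∧ (i : ℕ) ≤ (j : ℕ) then p.coeff (d + (i : ℕ) - (j : ℕ)) else 0)
    else
      (if (j : ℕ) ≤ (i : ℕ) ∧ (i : ℕ) - e ≤ (j : ℕ) then q.coeff (e + ((i : ℕ) - e) - (j : ℕ)) else 0)

open Polynomial Matrix Finset

lemma coeff_C_mul_X_pow_mul {R : Type*} [CommRing R] (c : R) (m k : ℕ) (f : Polynomial R) :
    (C c * X ^ m * f).coeff k = c * (if m ≤ k then f.coeff (k - m) else 0) := by
  rw [mul_right_comm, coeff_mul_X_pow']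
  split_ifs <;> simp [coeff_C_mul]

lemma sylvester_vecMul {R : Type*} [CommRing R] (d e : ℕ) (p q : Polynomial R)
    (hpd : p.natDegree ≤ d) (hqe : q.natDegree ≤ e)
    (v : Fin (e + d) → R) (j : Fin (e + d)) :
    Matrix.vecMul v (sylvesterMatrix d e p q) j =
      ((∑ i : Fin e, C (v (Fin.castAdd d i)) * X ^ (e - 1 - (i : ℕ))) * p
        + (∑ i : Fin d, C (v (Fin.natAdd e i)) * X ^ (d - 1 - (i : ℕ))) * q).coeff
        (d + e - 1 - (j : ℕ)) := by
  have hj : (j : ℕ) < e + d := j.isLt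
  rw [coeff_add, Finset.sum_mul, Finset.sum_mul, finset_sum_coeff, finset_sum_coeff,
    Matrix.vecMul, dotProduct, Fin.sum_univ_add]
  congr 1
  · apply Finset.sum_congr rfl
    intro i _
    have hi : (i : ℕ) < e := i.isLt
    rw [coeff_C_mul_X_pow_mul, sylvesterMatrix]
    simp only [Matrix.of_apply, Fin.coe_castAdd, if_pos hi]
    congr 1
    split_ifs with h1 h2 h2
    · congr 1; omega
    · -- j ≤ d + i ∧ i ≤ j but ¬(e-1-i ≤ d+e-1-j) : impossible
      omega
    · -- ¬(j ≤ d+i ∧ i ≤ j) but e-1-i ≤ d+e-1-j : then j < i, coeff index > d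
      refine (coeff_eq_zero_of_natDegree_lt ?_).symm
      omega
    · rfl
  · apply Finset.sum_congr rfl
    intro i _
    have hi : (i : ℕ) < d := i.isLt
    rw [coeff_C_mul_X_pow_mul, sylvesterMatrix]
    simp only [Matrix.of_apply, Fin.coe_natAdd]
    rw [if_neg (by omega)]
    congr 1
    split_ifs with h1 h2 h2
    · congr 1; omega
    · omega
    · refine (coeff_eq_zero_of_natDegree_lt ?_).symm
      omega
    · rfl

lemma coeff_revSum {R : Type*} [CommRing R] (n : ℕ) (w : Fin n → R) (i : Fin n) :
    (∑ k : Fin n, C (w k) * X ^ (n - 1 - (k : ℕ))).coeff (n - 1 - (i : ℕ)) = w i := by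
  rw [finset_sum_coeff, Finset.sum_eq_single i]
  · simp [coeff_X_pow]
  · intro k _ hk
    have h1 : (k : ℕ) < n := k.isLt
    have h2 : (i : ℕ) < n := i.isLt
    have h3 : (k : ℕ) ≠ (i : ℕ) := fun h => hk (Fin.ext h)
    simp only [coeff_C_mul, coeff_X_pow]
    rw [if_neg (by omega), mul_zero]
  · simp

lemma revSum_eq {R : Type*} [CommRing R] (n : ℕ) (a : Polynomial R) (h : a.degree < n) :
    ∑ i : Fin n, C (a.coeff (n - 1 - (i : ℕ))) * X ^ (n - 1 - (i : ℕ)) = a := by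
  have hnd : a.natDegree < n ∨ (n = 0 ∧ a = 0) := by
    rcases eq_or_ne a 0 with rfl | ha
    · rcases Nat.eq_zero_or_pos n with rfl | hn
      · exact Or.inr ⟨rfl, rfl⟩
      · exact Or.inl (by simpa using hn)
    · exact Or.inl ((Polynomial.natDegree_lt_iff_degree_lt ha).mpr (by exact_mod_cast h))
  rcases hnd with hnd | ⟨rfl, rfl⟩
  · conv_rhs => rw [Polynomial.as_sum_range' a n hnd]
    rw [Fin.sum_univ_eq_sum_range (fun i => C (a.coeff (n - 1 - i)) * X ^ (n - 1 - i)),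
      Finset.sum_range_reflect (fun i => C (a.coeff i) * X ^ i) n]
    exact Finset.sum_congr rfl fun i _ => C_mul_X_pow_eq_monomial
  · simp

lemma degree_mul_lt_aux {K : Type*} [Field K] (A p : Polynomial K) (e d : ℕ)
    (hA : A.degree < (e : WithBot ℕ)) (hp : p.natDegree ≤ d) : (A * p).degree < ((e + d : ℕ) : WithBot ℕ) := by
  rcases eq_or_ne A 0 with rfl | hA0
  · rw [zero_mul, Polynomial.degree_zero]; exact WithBot.bot_lt_coe _
  rcases eq_or_ne p 0 with rfl | hp0
  · rw [mul_zero, Polynomial.degree_zero]; exact WithBot.bot_lt_coe _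
  rw [Polynomial.degree_mul, Polynomial.degree_eq_natDegree hA0, Polynomial.degree_eq_natDegree hp0]
  have h1 : A.natDegree < e := (Polynomial.natDegree_lt_iff_degree_lt hA0).mpr hA
  exact_mod_cast (by omega : A.natDegree + p.natDegree < e + d)

/-- The resultant of `p` and `q`: the determinant of their Sylvester matrix. -/
noncomputable def resultant {R : Type*} [CommRing R] (p q : Polynomial R) : R :=
  (sylvesterMatrix p.natDegree q.natDegree p q).det

lemma resultant_eq_zero_iff_exists {K : Type*} [Field K] (p q : Polynomial K) :
    _root_.resultant p q = 0 ↔ ∃ a b : Polynomial K, a.degree < q.natDegree ∧ b.degree < p.natDegree ∧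
      ¬(a = 0 ∧ b = 0) ∧ a * p + b * q = 0 := by
  classical
  set d := p.natDegree
  set e := q.natDegree
  rw [_root_.resultant, ← Matrix.exists_vecMul_eq_zero_iff]
  constructor
  · rintro ⟨v, hv, hv0⟩
    refine ⟨∑ i : Fin e, C (v (Fin.castAdd d i)) * X ^ (e - 1 - (i : ℕ)),
      ∑ i : Fin d, C (v (Fin.natAdd e i)) * X ^ (d - 1 - (i : ℕ)), ?_, ?_, ?_, ?_⟩
    · refine lt_of_le_of_lt (Polynomial.degree_sum_le _ _) ?_
      refine Finset.sup_lt_iff (by exact_mod_cast WithBot.bot_lt_coe e) |>.mpr fun i _ => ?_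
      exact lt_of_le_of_lt (degree_C_mul_X_pow_le _ _) (by exact_mod_cast (by omega : e - 1 - (i:ℕ) < e))
    · refine lt_of_le_of_lt (Polynomial.degree_sum_le _ _) ?_
      refine Finset.sup_lt_iff (by exact_mod_cast WithBot.bot_lt_coe d) |>.mpr fun i _ => ?_
      exact lt_of_le_of_lt (degree_C_mul_X_pow_le _ _) (by exact_mod_cast (by omega : d - 1 - (i:ℕ) < d))
    · rintro ⟨ha, hb⟩
      apply hv
      funext i
      refine Fin.addCases (fun i' => ?_) (fun i' => ?_) i
      · have := coeff_revSum e (fun k => v (Fin.castAdd d k)) i'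
        rw [ha] at this; simpa using this.symm
      · have := coeff_revSum d (fun k => v (Fin.natAdd e k)) i'
        rw [hb] at this; simpa using this.symm
    · set A := ∑ i : Fin e, C (v (Fin.castAdd d i)) * X ^ (e - 1 - (i : ℕ)) with hAdef
      set B := ∑ i : Fin d, C (v (Fin.natAdd e i)) * X ^ (d - 1 - (i : ℕ)) with hBdef
      have hAe : A.degree < e := by
        refine lt_of_le_of_lt (Polynomial.degree_sum_le _ _) ?_
        refine Finset.sup_lt_iff (by exact_mod_cast WithBot.bot_lt_coe e) |>.mpr fun i _ => ?_
        exact lt_of_le_of_lt (degree_C_mul_X_pow_le _ _) (by exact_mod_cast (by omega : e - 1 - (i:ℕ) < e))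
      have hBd : B.degree < d := by
        refine lt_of_le_of_lt (Polynomial.degree_sum_le _ _) ?_
        refine Finset.sup_lt_iff (by exact_mod_cast WithBot.bot_lt_coe d) |>.mpr fun i _ => ?_
        exact lt_of_le_of_lt (degree_C_mul_X_pow_le _ _) (by exact_mod_cast (by omega : d - 1 - (i:ℕ) < d))
      have hdeg : (A * p + B * q).degree < ((d + e : ℕ) : WithBot ℕ) := by
        refine lt_of_le_of_lt (Polynomial.degree_add_le _ _) (max_lt ?_ ?_)
        · exact (by rw [Nat.add_comm d e] : ((e + d : ℕ) : WithBot ℕ) = ((d + e : ℕ) : WithBot ℕ)) ▸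
            degree_mul_lt_aux A p e d hAe le_rfl
        · exact degree_mul_lt_aux B q d e hBd le_rfl
      ext k
      rw [Polynomial.coeff_zero]
      by_cases hk : k < d + e
      · have hj : d + e - 1 - (d + e - 1 - k) = k := by omega
        have := congrFun hv0 ⟨d + e - 1 - k, by omega⟩
        rw [sylvester_vecMul d e p q le_rfl le_rfl] at this
        simpa [hj] using this
      · exact Polynomial.coeff_eq_zero_of_degree_lt
          (lt_of_lt_of_le hdeg (by exact_mod_cast Nat.le_of_not_lt hk))
  · rintro ⟨a, b, hae, hbd, hab, h0⟩
    refine ⟨Fin.append (fun i : Fin e => a.coeff (e - 1 - (i : ℕ)))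
      (fun i : Fin d => b.coeff (d - 1 - (i : ℕ))), ?_, ?_⟩
    · intro hv
      refine hab ⟨?_, ?_⟩
      · rw [← revSum_eq e a hae]
        refine Finset.sum_eq_zero fun i _ => ?_
        have h := congrFun hv (Fin.castAdd d i)
        rw [Fin.append_left] at h
        simp only [Pi.zero_apply] at h
        simp [h]
      · rw [← revSum_eq d b hbd]
        refine Finset.sum_eq_zero fun i _ => ?_
        have h := congrFun hv (Fin.natAdd e i)
        rw [Fin.append_right] at h
        simp only [Pi.zero_apply] at h
        simp [h]
    · funext j
      rw [sylvester_vecMul d e p q le_rfl le_rfl]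
      have hl : ∀ i : Fin e, Fin.append (fun i : Fin e => a.coeff (e - 1 - (i : ℕ)))
          (fun i : Fin d => b.coeff (d - 1 - (i : ℕ))) (Fin.castAdd d i) = a.coeff (e - 1 - (i : ℕ)) :=
        fun i => Fin.append_left _ _ i
      have hr : ∀ i : Fin d, Fin.append (fun i : Fin e => a.coeff (e - 1 - (i : ℕ)))
          (fun i : Fin d => b.coeff (d - 1 - (i : ℕ))) (Fin.natAdd e i) = b.coeff (d - 1 - (i : ℕ)) :=
        fun i => Fin.append_right _ _ i
      simp only [hl, hr]
      rw [revSum_eq e a hae, revSum_eq d b hbd, h0]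
      simp

lemma exists_iff_not_isCoprime {K : Type*} [Field K] (p q : Polynomial K)
    (hp : p ≠ 0) (hq : q ≠ 0) :
    (∃ a b : Polynomial K, a.degree < q.natDegree ∧ b.degree < p.natDegree ∧
      ¬(a = 0 ∧ b = 0) ∧ a * p + b * q = 0) ↔ ¬ IsCoprime p q := by
  classical
  constructor
  · rintro ⟨a, b, hae, hbd, hab, h0⟩ hcop
    have hb : b ≠ 0 := by
      rintro rfl
      rw [zero_mul, add_zero, mul_eq_zero] at h0
      exact hab ⟨h0.resolve_right hp, rfl⟩
    have hdvd : p ∣ b * q := ⟨-a, by linear_combination h0⟩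
    have hpb : p ∣ b := hcop.dvd_of_dvd_mul_right hdvd
    have h1 : p.natDegree ≤ b.natDegree := Polynomial.natDegree_le_of_dvd hpb hb
    have h2 : b.natDegree < p.natDegree := (Polynomial.natDegree_lt_iff_degree_lt hb).mpr hbd
    omega
  · intro h
    set g := EuclideanDomain.gcd p q with hg
    have hg0 : g ≠ 0 := fun h' => hp (EuclideanDomain.gcd_eq_zero_iff.mp h').1
    have hgu : ¬ IsUnit g := fun h' => h (EuclideanDomain.gcd_isUnit_iff.mp h')
    have hgdeg : 0 < g.natDegree := by
      rcases Nat.eq_zero_or_pos g.natDegree with h' | h'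
      · exact absurd (Polynomial.isUnit_iff_degree_eq_zero.mpr
          (by rw [Polynomial.degree_eq_natDegree hg0, h']; rfl)) hgu
      · exact h'
    obtain ⟨p', hp'⟩ := EuclideanDomain.gcd_dvd_left p q
    obtain ⟨q', hq'⟩ := EuclideanDomain.gcd_dvd_right p q
    have hp'0 : p' ≠ 0 := fun h' => hp (by rw [hp', h', mul_zero])
    have hq'0 : q' ≠ 0 := fun h' => hq (by rw [hq', h', mul_zero])
    refine ⟨q', -p', ?_, ?_, fun h' => hq'0 h'.1, by linear_combination q' * hp' - p' * hq'⟩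
    · refine (Polynomial.natDegree_lt_iff_degree_lt hq'0).mp ?_
      rw [hq', Polynomial.natDegree_mul hg0 hq'0]
      omega
    · rw [Polynomial.degree_neg]
      refine (Polynomial.natDegree_lt_iff_degree_lt hp'0).mp ?_
      rw [hp', Polynomial.natDegree_mul hg0 hp'0]
      omega

/-- Over a field, the resultant of two nonzero polynomials vanishes iff they have a
common root in an algebraically closed extension (the leading coefficients of nonzero
polynomials over a field are units). -/
theorem resultant_eq_zero_iff_common_root {K A : Type*} [Field K] [Field A]
    [IsAlgClosed A] [Algebra K A] (p q : Polynomial K) (hp : p ≠ 0) (hq : q ≠ 0) :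
    _root_.resultant p q = 0 ↔ ∃ a : A, Polynomial.aeval a p = 0 ∧ Polynomial.aeval a q = 0 := by
  rw [resultant_eq_zero_iff_exists, exists_iff_not_isCoprime p q hp hq,
    Polynomial.isCoprime_iff_aeval_ne_zero_of_isAlgClosed (k := K) A p q]
  push_neg
  rfl
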